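/- arXiv:1603.05803 — 4 statements merged into one kernel-verified Lean document; each statement's English description precedes it below -/
import Mathlib

section
/- For any multiarrangement (A,m) of rank two and any H ∈ A, one has b_2(A,m) = d1·d2 ≥ m(H)·(|m| − m(H)), where (d1,d2) are the exponents of (A,m). -/
open MvPolynomial

/-- The data of a (central) arrangement of hyperplanes in `K^ℓ`:
a finite index set together with pairwise non-proportional nonzero
linear defining forms. -/
structure ArrData (K : Type) [Field K] (ℓ : ℕ) where
  ι : Type
  fin : Fintype ι
  α : ι → MvPolynomial (Fin ℓ) K
  homog : ∀ i, (α i).IsHomogeneous 1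
  nz : ∀ i, α i ≠ 0
  nprop : ∀ i j, i ≠ j → ∀ c : K, α i ≠ c • α j

attribute [instance] ArrData.fin

variable {K : Type} [Field K] {ℓ : ℕ}

abbrev MPoly (K : Type) [Field K] (ℓ : ℕ) := MvPolynomial (Fin ℓ) K

/-- Logarithmic derivation module of the multiarrangement, with the defining
divisibility conditions imposed only for indices in `T`.  -/
def DmodOn (A : ArrData K ℓ) (m : A.ι → ℕ) (T : Set A.ι) :
    Submodule (MPoly K ℓ) (Derivation K (MPoly K ℓ) (MPoly K ℓ)) where
  carrier := {θ | ∀ i ∈ T, A.α i ^ m i ∣ θ (A.α i)}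
  add_mem' := fun ha hb i hi => by
    simpa using dvd_add (ha i hi) (hb i hi)
  zero_mem' := fun i _ => by simp
  smul_mem' := fun c θ hθ i hi => by
    simpa [Derivation.smul_apply, smul_eq_mul] using Dvd.dvd.mul_left (hθ i hi) c

/-- The logarithmic derivation module `D(A,m)`. -/
def Dmod (A : ArrData K ℓ) (m : A.ι → ℕ) :
    Submodule (MPoly K ℓ) (Derivation K (MPoly K ℓ) (MPoly K ℓ)) :=
  DmodOn A m Set.univ

/-- A derivation is homogeneous of polynomial degree `d`. -/
def pdegIs (θ : Derivation K (MPoly K ℓ) (MPoly K ℓ)) (d : ℕ) : Prop :=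
  ∀ t : Fin ℓ, (θ (X t)).IsHomogeneous d

/-- `(A,m)` has a homogeneous basis of its logarithmic derivation module with
polynomial degrees `d 0, …, d (ℓ-1)`; i.e. `(A,m)` is free with exponents `d`. -/
def IsBasisOfDeg (A : ArrData K ℓ) (m : A.ι → ℕ) (d : Fin ℓ → ℕ) : Prop :=
  ∃ b : Module.Basis (Fin ℓ) (MPoly K ℓ) (Dmod A m),
    ∀ j, pdegIs ((b j : Derivation K (MPoly K ℓ) (MPoly K ℓ))) (d j)

/-- `|m|`, the total multiplicity. -/
def totalMult (A : ArrData K ℓ) (m : A.ι → ℕ) : ℕ := ∑ i, m i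

/-- The set of codimension-two flats, encoded by their localizations
(sets of indices of hyperplanes containing the flat). -/
def L2 (A : ArrData K ℓ) : Set (Set A.ι) :=
  {T | ∃ i j, i ≠ j ∧ T = {k | A.α k ∈ Submodule.span K {A.α i, A.α j}}}

/-- The localized multiarrangement at the rank-two flat `T` is free with
exponents `(e, f, 0, …, 0)`. -/
def IsLocExp (A : ArrData K ℓ) (m : A.ι → ℕ) (T : Set A.ι) (e f : ℕ) : Prop :=
  ∃ (b : Module.Basis (Fin ℓ) (MPoly K ℓ) (DmodOn A m T)) (d : Fin ℓ → ℕ),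
    (∀ j, pdegIs ((b j : Derivation K (MPoly K ℓ) (MPoly K ℓ))) (d j)) ∧
    Finset.univ.val.map d = e ::ₘ f ::ₘ Multiset.replicate (ℓ - 2) 0

/-- `b₂` of the localization at a rank-two flat: the product of its two
nontrivial exponents. -/
noncomputable def b2loc (A : ArrData K ℓ) (m : A.ι → ℕ) (T : Set A.ι) : ℕ :=
  sSup {n | ∃ e f, IsLocExp A m T e f ∧ n = e * f}

/-- The second Betti number of `(A,m)`, via the local-global formula
`b₂(A,m) = ∑_{X ∈ L₂(A)} e₁(X)e₂(X)`. -/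
noncomputable def b2m (A : ArrData K ℓ) (m : A.ι → ℕ) : ℕ :=
  ∑ᶠ T ∈ L2 A, b2loc A m T

/-- Setting the first variable to zero. -/
noncomputable def res0 : MvPolynomial (Fin (ℓ+1)) K →ₐ[K] MvPolynomial (Fin ℓ) K :=
  aeval (Fin.cases 0 X)

/-- `(B, mB)` is the multi-Ziegler restriction of `(A, m)` onto the hyperplane
`i0`, in coordinates where `α_{i0} = x₀` and the hyperplane `{x₀ = 0}` is
identified with `K^ℓ` via the last `ℓ` coordinates. -/
def IsMZRes (A : ArrData K (ℓ+1)) (i0 : A.ι) (m : A.ι → ℕ)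
    (B : ArrData K ℓ) (mB : B.ι → ℕ) : Prop :=
  A.α i0 = X 0 ∧
  ∃ r : {j : A.ι // j ≠ i0} → B.ι,
    Function.Surjective r ∧
    (∀ j : {j : A.ι // j ≠ i0}, ∃ c : K, c ≠ 0 ∧
      res0 (A.α j.1) = c • B.α (r j)) ∧
    (∀ k : B.ι, mB k = ∑ᶠ j ∈ {j : {j : A.ι // j ≠ i0} | r j = k}, m j.1)

/-- restriction of a derivation annihilating `x₀` to the hyperplane `{x₀ = 0}`. -/
noncomputable def resDer (θ : Derivation K (MPoly K (ℓ+1)) (MPoly K (ℓ+1))) :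
    Derivation K (MPoly K ℓ) (MPoly K ℓ) :=
  Derivation.mk'
    ((res0 (K := K) (ℓ := ℓ)).toLinearMap ∘ₗ θ.toLinearMap ∘ₗ
      (rename (R := K) (Fin.succ : Fin ℓ → Fin (ℓ+1))).toLinearMap)
    (by
      intro a b
      have h1 : ∀ p : MPoly K ℓ, res0 (K := K) (rename Fin.succ p) = p := by
        intro p
        simp only [res0, aeval_rename]
        have : (Fin.cases 0 X ∘ Fin.succ : Fin ℓ → MPoly K ℓ) = X := by
          funext t; simp
        rw [this]
        simp [aeval_X_left]
      simp only [LinearMap.coe_comp, Function.comp_apply, AlgHom.toLinearMap_apply,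
        Derivation.coeFn_coe, map_mul, Derivation.leibniz, map_add, smul_eq_mul, h1])

namespace Stmt1Aux
variable {K : Type} [Field K] {σ : Type*}

noncomputable def homExp : MvPolynomial σ K →ₐ[K] Polynomial (MvPolynomial σ K) :=
  aeval fun i => Polynomial.X * Polynomial.C (X i)

lemma homExp_monomial (d : σ →₀ ℕ) (r : K) :
    homExp (monomial d r) = Polynomial.C (monomial d r) * Polynomial.X ^ d.degree := by
  classical
  rw [homExp, aeval_monomial]
  have h1 : (d.prod fun i k => (Polynomial.X * Polynomial.C (X i : MvPolynomial σ K)) ^ k)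
      = Polynomial.X ^ d.degree * Polynomial.C (d.prod fun i k => (X i : MvPolynomial σ K) ^ k) := by
    rw [Finsupp.prod, Finsupp.prod]
    simp only [mul_pow, ← Polynomial.C_pow]
    rw [Finset.prod_mul_distrib, Finset.prod_pow_eq_pow_sum, map_prod, Finsupp.degree_apply]
  rw [h1, monomial_eq]
  have h2 : algebraMap K (Polynomial (MvPolynomial σ K)) r = Polynomial.C (C r) := rfl
  rw [h2, map_mul]
  ring

lemma coeff_homExp (p : MvPolynomial σ K) (n : ℕ) :
    (homExp p).coeff n = homogeneousComponent n p := by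
  classical
  conv_lhs => rw [p.as_sum]
  rw [map_sum, Polynomial.finset_sum_coeff]
  simp only [homExp_monomial, Polynomial.coeff_C_mul, Polynomial.coeff_X_pow]
  rw [homogeneousComponent_apply, Finset.sum_filter]
  apply Finset.sum_congr rfl
  intro d _
  by_cases h : d.degree = n
  · simp [h]
  · rw [if_neg h, if_neg (fun hn => h hn.symm), mul_zero]

lemma homExp_eq {p : MvPolynomial σ K} {n : ℕ} (h : p.IsHomogeneous n) :
    homExp p = Polynomial.C p * Polynomial.X ^ n := by
  ext k
  rw [coeff_homExp, Polynomial.coeff_C_mul, Polynomial.coeff_X_pow,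
    homogeneousComponent_of_mem ((mem_homogeneousSubmodule n p).2 h)]
  by_cases hk : k = n <;> simp [hk]

lemma le_of_dvd_homog {a b : MvPolynomial σ K} {da db : ℕ}
    (ha : a.IsHomogeneous da) (hb : b.IsHomogeneous db) (hb0 : b ≠ 0) (hdvd : a ∣ b) :
    da ≤ db := by
  obtain ⟨c, rfl⟩ := hdvd
  have ha0 : a ≠ 0 := left_ne_zero_of_mul hb0
  have h1 : (Polynomial.C a * Polynomial.X ^ da) * homExp c
      = Polynomial.C (a * c) * Polynomial.X ^ db := by
    rw [← homExp_eq ha, ← map_mul, homExp_eq hb]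
  have hc0 : homExp c ≠ 0 := by
    intro h
    rw [h, mul_zero] at h1
    apply_fun (Polynomial.coeff · db) at h1
    simp only [Polynomial.coeff_zero, Polynomial.coeff_C_mul, Polynomial.coeff_X_pow,
      if_pos rfl, mul_one, if_true] at h1
    exact hb0 h1.symm
  have h2 := congrArg Polynomial.natDegree h1
  rw [Polynomial.natDegree_mul (by simp [ha0]) hc0,
    Polynomial.natDegree_C_mul_X_pow da a ha0,
    Polynomial.natDegree_C_mul_X_pow db (a*c) hb0] at h2
  omega

lemma eq_C_of_homExp_natDegree_eq_zero {u : MvPolynomial σ K}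
    (h : (homExp u).natDegree = 0) : u = C (coeff 0 u) := by
  have h2 : ∀ k, k ≠ 0 → homogeneousComponent k u = 0 := by
    intro k hk
    rw [← coeff_homExp]
    exact Polynomial.coeff_eq_zero_of_natDegree_lt (by omega)
  conv_lhs => rw [← sum_homogeneousComponent u]
  rw [Finset.sum_eq_single 0]
  · simp
  · exact fun k _ hk => h2 k hk
  · simp

lemma homExp_ne_zero {u : MvPolynomial σ K} (hu : u ≠ 0) : homExp u ≠ 0 := by
  intro h
  apply hu
  have h2 : ∀ k, homogeneousComponent k u = 0 := by
    intro k; rw [← coeff_homExp, h, Polynomial.coeff_zero]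
  conv_lhs => rw [← sum_homogeneousComponent u]
  simp [h2]

lemma isUnit_of_homog_one {p : MvPolynomial σ K} (h : p.IsHomogeneous 1) (h0 : p ≠ 0)
    {u v : MvPolynomial σ K} (huv : p = u * v) : IsUnit u ∨ IsUnit v := by
  have hu0 : u ≠ 0 := left_ne_zero_of_mul (huv ▸ h0)
  have hv0 : v ≠ 0 := right_ne_zero_of_mul (huv ▸ h0)
  have h1 : (homExp u).natDegree + (homExp v).natDegree = 1 := by
    have h2 : homExp u * homExp v = Polynomial.C p * Polynomial.X ^ 1 := by
      rw [← map_mul, ← huv, homExp_eq h]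
    have := congrArg Polynomial.natDegree h2
    rwa [Polynomial.natDegree_mul (homExp_ne_zero hu0) (homExp_ne_zero hv0),
      Polynomial.natDegree_C_mul_X_pow 1 p h0] at this
  have key : ∀ w : MvPolynomial σ K, w ≠ 0 → (homExp w).natDegree = 0 → IsUnit w := by
    intro w hw hdeg
    have := eq_C_of_homExp_natDegree_eq_zero hdeg
    rw [this]
    have : coeff 0 w ≠ 0 := fun hcw => hw (by rw [this, hcw, map_zero])
    exact (isUnit_iff_ne_zero.2 this).map C
  rcases Nat.eq_zero_or_pos (homExp u).natDegree with h2 | h2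
  · exact Or.inl (key u hu0 h2)
  · exact Or.inr (key v hv0 (by omega))

lemma prime_of_lin {p : MvPolynomial σ K} (h : p.IsHomogeneous 1) (h0 : p ≠ 0) : Prime p := by
  rw [← UniqueFactorizationMonoid.irreducible_iff_prime]
  constructor
  · intro hu
    have : p ∣ 1 := hu.dvd
    have := le_of_dvd_homog h (isHomogeneous_one σ K) one_ne_zero this
    omega
  · intro u v huv
    exact isUnit_of_homog_one h h0 huv

lemma not_dvd_of_nprop {α β : MvPolynomial σ K} (hα : α.IsHomogeneous 1)
    (hβ : β.IsHomogeneous 1) (hne : ∀ c : K, α ≠ c • β) : ¬ β ∣ α := by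
  rintro ⟨c, rfl⟩
  have hα0 : β * c ≠ 0 := fun h => hne 0 (by rw [h, zero_smul])
  have hc0 : c ≠ 0 := right_ne_zero_of_mul hα0
  have hβ0' : β ≠ 0 := left_ne_zero_of_mul hα0
  have h1 : homExp β * homExp c = Polynomial.C (β * c) * Polynomial.X ^ 1 := by
    rw [← map_mul, homExp_eq hα]
  rw [homExp_eq hβ] at h1
  have h2 := congrArg Polynomial.natDegree h1
  rw [Polynomial.natDegree_mul (by simp [hβ0']) (homExp_ne_zero hc0),
    Polynomial.natDegree_C_mul_X_pow 1 β hβ0',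
    Polynomial.natDegree_C_mul_X_pow 1 (β * c) hα0] at h2
  have h3 := eq_C_of_homExp_natDegree_eq_zero (u := c) (by omega)
  exact hne (coeff 0 c) (by rw [smul_eq_C_mul, ← h3, mul_comm])

lemma prod_pow_dvd {ι : Type} (s : Finset ι) (α : ι → MvPolynomial σ K)
    (hhom : ∀ i, (α i).IsHomogeneous 1) (h0 : ∀ i, α i ≠ 0)
    (hnp : ∀ i j, i ≠ j → ∀ c : K, α i ≠ c • α j) (m : ι → ℕ) (z : MvPolynomial σ K)
    (hz : ∀ i ∈ s, α i ^ m i ∣ z) : (∏ i ∈ s, α i ^ m i) ∣ z := by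
  classical
  induction s using Finset.induction with
  | empty => simpa using one_dvd z
  | @insert j s hj ih =>
    rw [Finset.prod_insert hj]
    obtain ⟨w, rfl⟩ := ih (fun i hi => hz i (Finset.mem_insert_of_mem hi))
    have hp := prime_of_lin (hhom j) (h0 j)
    have hnd : ¬ α j ∣ ∏ i ∈ s, α i ^ m i := by
      rw [Prime.dvd_finset_prod_iff hp]
      rintro ⟨i, hi, hdvd⟩
      have hne : i ≠ j := fun h => hj (h ▸ hi)
      exact not_dvd_of_nprop (hhom i) (hhom j) (hnp i j hne) (hp.dvd_of_dvd_pow hdvd)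
    have h1 : α j ^ m j ∣ w :=
      hp.pow_dvd_of_dvd_mul_left (m j) hnd (hz j (Finset.mem_insert_self j s))
    rw [mul_comm (α j ^ m j)]
    exact mul_dvd_mul_left _ h1

lemma fin2_degree (d : Fin 2 →₀ ℕ) : d.degree = d 0 + d 1 := by
  classical
  rw [Finsupp.degree_apply, Finset.sum_subset (Finset.subset_univ d.support)
    (fun x _ hx => Finsupp.notMem_support_iff.1 hx), Fin.sum_univ_two]

lemma fin2_eq_single {d : Fin 2 →₀ ℕ} (h : d.degree = 1) :
    d = Finsupp.single 0 1 ∨ d = Finsupp.single 1 1 := by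
  rw [fin2_degree] at h
  rcases Nat.eq_zero_or_pos (d 0) with h0 | h0
  · right
    ext x
    match x with
    | 0 => simp [h0, Finsupp.single_eq_of_ne (by decide : (1:Fin 2) ≠ 0)]
    | 1 => simp [Finsupp.single_eq_same]; omega
  · left
    ext x
    match x with
    | 0 => simp [Finsupp.single_eq_same]; omega
    | 1 => simp [Finsupp.single_eq_of_ne (by decide : (0:Fin 2) ≠ 1)]; omega

lemma lin_repr {p : MvPolynomial (Fin 2) K} (h : p.IsHomogeneous 1) :
    p = C (coeff (Finsupp.single 0 1) p) * X 0 + C (coeff (Finsupp.single 1 1) p) * X 1 := by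
  have hne : (Finsupp.single 0 1 : Fin 2 →₀ ℕ) ≠ Finsupp.single 1 1 := by
    intro hs
    have := DFunLike.congr_fun hs 0
    simp [Finsupp.single_eq_same, Finsupp.single_eq_of_ne (by decide : (1:Fin 2) ≠ 0)] at this
  ext d
  rw [coeff_add, coeff_C_mul, coeff_C_mul, coeff_X', coeff_X']
  by_cases h1 : d = Finsupp.single 0 1
  · rw [if_pos h1.symm, if_neg (by rw [h1]; exact fun hh => hne hh.symm), h1]
    ring
  · by_cases h2 : d = Finsupp.single 1 1
    · rw [if_neg (by rw [h2]; exact fun hh => hne hh), if_pos h2.symm, h2]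
      ring
    · rw [if_neg (fun hh => h1 hh.symm), if_neg (fun hh => h2 hh.symm)]
      have hd : d.degree ≠ 1 := by
        intro hdeg
        rcases fin2_eq_single hdeg with h | h
        · exact h1 h
        · exact h2 h
      rw [h.coeff_eq_zero hd]
      ring

lemma IsHomog_prod_pow (A : ArrData K 2) (m : A.ι → ℕ) :
    (∏ i, A.α i ^ m i).IsHomogeneous (totalMult A m) := by
  unfold totalMult
  exact IsHomogeneous.prod _ _ m fun i _ => by simpa using (A.homog i).pow (m i)

lemma branch_aux (A : ArrData K 2) (m : A.ι → ℕ) (i0 : A.ι) (e : ℕ)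
    (v : MvPolynomial (Fin 2) K) (hv : v ≠ 0) (hvh : v.IsHomogeneous e)
    (hdvd : ∀ i, i ≠ i0 → A.α i ^ m i ∣ v) : totalMult A m - m i0 ≤ e := by
  classical
  have hprod : (∏ i ∈ Finset.univ.erase i0, A.α i ^ m i) ∣ v :=
    prod_pow_dvd _ A.α A.homog A.nz A.nprop m v
      (fun i hi => hdvd i (Finset.ne_of_mem_erase hi))
  have hph : (∏ i ∈ Finset.univ.erase i0, A.α i ^ m i).IsHomogeneous
      (∑ i ∈ Finset.univ.erase i0, m i) :=
    IsHomogeneous.prod _ _ m (fun i _ => by simpa using (A.homog i).pow (m i))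
  have hle := le_of_dvd_homog hph hvh hv hprod
  have hsum := Finset.add_sum_erase Finset.univ m (Finset.mem_univ i0)
  unfold totalMult
  omega

end Stmt1Aux

set_option maxHeartbeats 2000000 in
/-- For a rank-two multiarrangement,
`b₂(A,m) = d₀·d₁ ≥ m(H)(|m| − m(H))`. -/
theorem stmt1 {K : Type} [Field K] (A : ArrData K 2) (m : A.ι → ℕ)
    (hm : ∀ i, 0 < m i) (d : Fin 2 → ℕ)
    (hfree : IsBasisOfDeg A m d) (i0 : A.ι) :
    m i0 * (totalMult A m - m i0) ≤ d 0 * d 1 := by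
  classical
  obtain ⟨b, hb⟩ := hfree
  set s := totalMult A m with hs
  set θ : Fin 2 → Derivation K (MPoly K 2) (MPoly K 2) := fun j => (b j : _) with hθ
  have hθmem : ∀ j i, A.α i ^ m i ∣ θ j (A.α i) := fun j i => (b j).2 i (Set.mem_univ i)
  have hθh : ∀ j t, (θ j (X t)).IsHomogeneous (d j) := fun j => hb j
  have hθnz : ∀ j, θ j ≠ 0 := fun j h => b.ne_zero j (Subtype.ext h)
  set a : A.ι → K := fun i => coeff (Finsupp.single 0 1) (A.α i) with ha
  set c : A.ι → K := fun i => coeff (Finsupp.single 1 1) (A.α i) with hc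
  have hrepr : ∀ i, A.α i = C (a i) * X 0 + C (c i) * X 1 :=
    fun i => Stmt1Aux.lin_repr (A.homog i)
  have hTheta : ∀ j i, θ j (A.α i) = C (a i) * θ j (X 0) + C (c i) * θ j (X 1) := by
    intro j i
    conv_lhs => rw [hrepr i]
    rw [← smul_eq_C_mul, ← smul_eq_C_mul, map_add, Derivation.map_smul, Derivation.map_smul,
      smul_eq_C_mul, smul_eq_C_mul]
  have hane : ∀ i, a i ≠ 0 ∨ c i ≠ 0 := by
    intro i
    by_contra hcon
    push_neg at hcon
    exact A.nz i (by rw [hrepr i, hcon.1, hcon.2]; simp)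
  have hcross : ∀ i i', i ≠ i' → a i * c i' - c i * a i' ≠ 0 := by
    intro i i' hne h
    rcases hane i' with h' | h'
    · apply A.nprop i i' hne (a i / a i')
      rw [hrepr i, hrepr i', smul_add, smul_eq_C_mul, smul_eq_C_mul, ← mul_assoc, ← mul_assoc,
        ← map_mul, ← map_mul]
      have e1 : a i / a i' * a i' = a i := div_mul_cancel₀ _ h'
      have e2 : a i / a i' * c i' = c i := by field_simp; linear_combination h
      rw [e1, e2]
    · apply A.nprop i i' hne (c i / c i')
      rw [hrepr i, hrepr i', smul_add, smul_eq_C_mul, smul_eq_C_mul, ← mul_assoc, ← mul_assoc,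
        ← map_mul, ← map_mul]
      have e1 : c i / c i' * a i' = a i := by field_simp; linear_combination -h
      have e2 : c i / c i' * c i' = c i := div_mul_cancel₀ _ h'
      rw [e1, e2]
  -- zero derivation criterion
  have hzero_der : ∀ j, θ j (X 0) = 0 → θ j (X 1) = 0 → False := by
    intro j h0 h1
    apply hθnz j
    apply derivation_ext
    intro t
    match t with
    | 0 => simpa using h0
    | 1 => simpa using h1
  -- degree bound for each basis element
  have hdegb : ∀ j, m i0 ≤ d j ∨ s - m i0 ≤ d j := by
    intro j
    by_cases hc1 : m i0 ≤ d j
    · exact Or.inl hc1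
    right
    push_neg at hc1
    have hα0 : θ j (A.α i0) = 0 := by
      by_contra h0
      have h1 : (θ j (A.α i0)).IsHomogeneous (d j) := by
        rw [hTheta j i0]
        exact ((hθh j 0).C_mul _).add ((hθh j 1).C_mul _)
      have h2 : ((A.α i0) ^ m i0).IsHomogeneous (m i0) := by
        simpa using (A.homog i0).pow (m i0)
      have := Stmt1Aux.le_of_dvd_homog h2 h1 h0 (hθmem j i0)
      omega
    have hrel : C (a i0) * θ j (X 0) + C (c i0) * θ j (X 1) = 0 := by
      rw [← hTheta]; exact hα0
    by_cases hci0 : c i0 ≠ 0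
    · -- use v := θ j (X 0)
      have hv : θ j (X 0) ≠ 0 := by
        intro h0
        apply hzero_der j h0
        have := hrel
        rw [h0, mul_zero, zero_add] at this
        have h2 := congrArg (fun q => C (c i0)⁻¹ * q) this
        simpa [← mul_assoc, ← map_mul, inv_mul_cancel₀ hci0] using h2
      apply Stmt1Aux.branch_aux A m i0 (d j) _ hv (hθh j 0)
      intro i hi
      have hD := hcross i i0 hi
      have hkey : C (a i * c i0 - c i * a i0) * θ j (X 0) = C (c i0) * θ j (A.α i) := by
        rw [hTheta j i, map_sub, map_mul, map_mul]
        linear_combination (-C (c i)) * hrel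
      have hdvd1 : A.α i ^ m i ∣ C (a i * c i0 - c i * a i0) * θ j (X 0) := by
        rw [hkey]; exact (hθmem j i).mul_left _
      have h2 := hdvd1.mul_left (C (a i * c i0 - c i * a i0)⁻¹)
      rwa [← mul_assoc, ← map_mul, inv_mul_cancel₀ hD, map_one, one_mul] at h2
    · -- c i0 = 0, a i0 ≠ 0, use v := θ j (X 1)
      push_neg at hci0
      have hai0 : a i0 ≠ 0 := (hane i0).resolve_right (by simp [hci0])
      have hv : θ j (X 1) ≠ 0 := by
        intro h1
        apply hzero_der j _ h1
        have := hrel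
        rw [h1, mul_zero, add_zero] at this
        have h2 := congrArg (fun q => C (a i0)⁻¹ * q) this
        simpa [← mul_assoc, ← map_mul, inv_mul_cancel₀ hai0] using h2
      apply Stmt1Aux.branch_aux A m i0 (d j) _ hv (hθh j 1)
      intro i hi
      have hD' : a i0 * c i - a i * c i0 ≠ 0 := by
        have := hcross i i0 hi
        intro h; apply this; linear_combination -h
      have hkey : C (a i0 * c i - a i * c i0) * θ j (X 1) = C (a i0) * θ j (A.α i) := by
        rw [hTheta j i, map_sub, map_mul, map_mul]
        linear_combination (-C (a i)) * hrel
      have hdvd1 : A.α i ^ m i ∣ C (a i0 * c i - a i * c i0) * θ j (X 1) := by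
        rw [hkey]; exact (hθmem j i).mul_left _
      have h2 := hdvd1.mul_left (C (a i0 * c i - a i * c i0)⁻¹)
      rwa [← mul_assoc, ← map_mul, inv_mul_cancel₀ hD', map_one, one_mul] at h2
  -- the determinant
  set Dt : MPoly K 2 := θ 0 (X 0) * θ 1 (X 1) - θ 0 (X 1) * θ 1 (X 0) with hDt
  have hzero_comb : ∀ u v : MPoly K 2, u • θ 0 + v • θ 1 = 0 → u = 0 ∧ v = 0 := by
    intro u v huv
    have hsum0 : u • b 0 + v • b 1 = (0 : Dmod A m) := by
      apply Subtype.ext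
      simp only [Submodule.coe_add, SetLike.val_smul, ZeroMemClass.coe_zero]
      exact huv
    have hrep := congrArg (⇑b.repr) hsum0
    rw [map_add, map_smul, map_smul, Module.Basis.repr_self, Module.Basis.repr_self, LinearEquiv.map_zero] at hrep
    constructor
    · have h01 := DFunLike.congr_fun hrep 0
      simpa [Finsupp.single_apply] using h01
    · have h01 := DFunLike.congr_fun hrep 1
      simpa [Finsupp.single_apply] using h01
  have hdnz : Dt ≠ 0 := by
    intro h0
    rw [hDt] at h0
    have e1 : (θ 1 (X 0)) • θ 0 + (-(θ 0 (X 0))) • θ 1 = 0 := by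
      apply derivation_ext
      intro t
      match t with
      | 0 =>
        simp only [Derivation.add_apply, Derivation.smul_apply, Derivation.zero_apply,
          smul_eq_mul]
        ring
      | 1 =>
        simp only [Derivation.add_apply, Derivation.smul_apply, Derivation.zero_apply,
          smul_eq_mul]
        linear_combination -h0
    have e2 : (θ 1 (X 1)) • θ 0 + (-(θ 0 (X 1))) • θ 1 = 0 := by
      apply derivation_ext
      intro t
      match t with
      | 0 =>
        simp only [Derivation.add_apply, Derivation.smul_apply, Derivation.zero_apply,
          smul_eq_mul]
        linear_combination h0
      | 1 =>
        simp only [Derivation.add_apply, Derivation.smul_apply, Derivation.zero_apply,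
          smul_eq_mul]
        ring
    obtain ⟨hP1, hP0⟩ := hzero_comb _ _ e1
    obtain ⟨hQ1, hQ0⟩ := hzero_comb _ _ e2
    rw [neg_eq_zero] at hP0 hQ0
    exact hzero_der 0 hP0 hQ0
  have hdet_dvd : ∀ i, A.α i ^ m i ∣ Dt := by
    intro i
    by_cases hci : c i ≠ 0
    · have h1 : C (c i) * Dt = θ 0 (X 0) * θ 1 (A.α i) - θ 1 (X 0) * θ 0 (A.α i) := by
        rw [hTheta 1 i, hTheta 0 i, hDt]
        ring
      have h2 : A.α i ^ m i ∣ C (c i) * Dt := by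
        rw [h1]
        exact dvd_sub ((hθmem 1 i).mul_left _) ((hθmem 0 i).mul_left _)
      have h3 := h2.mul_left (C (c i)⁻¹)
      rwa [← mul_assoc, ← map_mul, inv_mul_cancel₀ hci, map_one, one_mul] at h3
    · push_neg at hci
      have hai : a i ≠ 0 := (hane i).resolve_right (by simp [hci])
      have h1 : C (a i) * Dt = θ 1 (X 1) * θ 0 (A.α i) - θ 0 (X 1) * θ 1 (A.α i) := by
        rw [hTheta 1 i, hTheta 0 i, hDt]
        ring
      have h2 : A.α i ^ m i ∣ C (a i) * Dt := by
        rw [h1]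
        exact dvd_sub ((hθmem 0 i).mul_left _) ((hθmem 1 i).mul_left _)
      have h3 := h2.mul_left (C (a i)⁻¹)
      rwa [← mul_assoc, ← map_mul, inv_mul_cancel₀ hai, map_one, one_mul] at h3
  have hsumdeg : s ≤ d 0 + d 1 := by
    have hQdvd : (∏ i, A.α i ^ m i) ∣ Dt :=
      Stmt1Aux.prod_pow_dvd Finset.univ A.α A.homog A.nz A.nprop m Dt
        (fun i _ => hdet_dvd i)
    have hhomdet : Dt.IsHomogeneous (d 0 + d 1) :=
      ((hθh 0 0).mul (hθh 1 1)).sub ((hθh 0 1).mul (hθh 1 0))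
    have hQh : (∏ i, A.α i ^ m i).IsHomogeneous s :=
      Stmt1Aux.IsHomog_prod_pow A m
    exact Stmt1Aux.le_of_dvd_homog hQh hhomdet hdnz hQdvd
  have hms : m i0 ≤ s := Finset.single_le_sum (fun i _ => Nat.zero_le (m i)) (Finset.mem_univ i0)
  -- final arithmetic
  obtain ⟨n, hn⟩ : ∃ n, s = m i0 + n := ⟨s - m i0, by omega⟩
  have hsub : s - m i0 = n := by omega
  rw [hsub] at hdegb ⊢
  rcases hdegb 0 with h0 | h0 <;> rcases hdegb 1 with h1 | h1
  · obtain ⟨e0, he0⟩ := Nat.exists_eq_add_of_le h0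
    obtain ⟨e1, he1⟩ := Nat.exists_eq_add_of_le h1
    rw [he0, he1] at hsumdeg ⊢
    nlinarith [Nat.mul_le_mul_left (m i0) (show n ≤ m i0 + e0 + e1 by omega)]
  · exact Nat.mul_le_mul h0 h1
  · exact le_of_le_of_eq (Nat.mul_le_mul h1 h0) (mul_comm _ _)
  · obtain ⟨e0, he0⟩ := Nat.exists_eq_add_of_le h0
    obtain ⟨e1, he1⟩ := Nat.exists_eq_add_of_le h1
    rw [he0, he1] at hsumdeg ⊢
    nlinarith [Nat.mul_le_mul_right n (show m i0 ≤ n + e0 + e1 by omega)]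
end

section
/- Let (A,m) be a multiarrangement, H_0 ∈ A with defining form α_{H_0}, and let δ ∈ D_0^p(A,m) := {δ ∈ D^p(A,m) : δ(α_{H_0}, f_2,…,f_p) = 0 for all f_i ∈ S}. Then the restriction δ|_{H_0} belongs to D^p(A^{H_0}, m^{H_0}), where (A^{H_0}, m^{H_0}) is the multi-Ziegler restriction. In particular there is a well-defined restriction map res^p : D_0^p(A,m) → D^p(A^{H_0}, m^{H_0}). -/
open MvPolynomial

variable {K : Type} [Field K] {ℓ : ℕ}

/-- `θ` is an alternating multiderivation of arity `p` (an element of `Der^p(S)`). -/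
def IsMultiDer {K : Type} [Field K] {ℓ p : ℕ}
    (θ : (Fin p → MPoly K ℓ) → MPoly K ℓ) : Prop :=
  (∀ (v : Fin p → MPoly K ℓ) (i j : Fin p), i ≠ j → v i = v j → θ v = 0) ∧
  (∀ (s : Fin p) (v : Fin p → MPoly K ℓ) (a : K) (f g : MPoly K ℓ),
      θ (Function.update v s (a • f + g)) =
        a • θ (Function.update v s f) + θ (Function.update v s g)) ∧
  (∀ (s : Fin p) (v : Fin p → MPoly K ℓ) (f g : MPoly K ℓ),
      θ (Function.update v s (f * g)) =
        f * θ (Function.update v s g) + g * θ (Function.update v s f))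

/-- Membership in `D^p(A,m)`. -/
def InDp {K : Type} [Field K] {ℓ : ℕ} (A : ArrData K ℓ) (m : A.ι → ℕ) {p : ℕ}
    (θ : (Fin p → MPoly K ℓ) → MPoly K ℓ) : Prop :=
  IsMultiDer θ ∧
  ∀ (i : A.ι) (s : Fin p) (v : Fin p → MPoly K ℓ),
    A.α i ^ m i ∣ θ (Function.update v s (A.α i))

section Aux

variable {n : ℕ}

lemma res0_rename (q : MPoly K ℓ) :
    res0 (rename (Fin.succ : Fin ℓ → Fin (ℓ+1)) q) = q := by
  simp only [res0, aeval_rename]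
  have : (Fin.cases 0 X ∘ Fin.succ : Fin ℓ → MPoly K ℓ) = X := by
    funext t; simp
  rw [this]
  simp [aeval_X_left]

lemma res0_C (a : K) : res0 (C a : MPoly K (ℓ+1)) = C a := by
  simp [res0, algebraMap_eq]

lemma res0_X0 : res0 (X 0 : MPoly K (ℓ+1)) = 0 := by
  simp [res0]

lemma res0_X_succ (t : Fin ℓ) : res0 (X (Fin.succ t) : MPoly K (ℓ+1)) = X t := by
  simp [res0]

lemma res0_smul (a : K) (q : MPoly K (ℓ+1)) : res0 (a • q) = a • res0 q := by
  rw [smul_eq_C_mul, map_mul, res0_C, smul_eq_C_mul]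

lemma X0_dvd_sub (q : MPoly K (ℓ+1)) :
    (X 0 : MPoly K (ℓ+1)) ∣ q - rename Fin.succ (res0 q) := by
  induction q using MvPolynomial.induction_on with
  | C a => rw [res0_C, rename_C, sub_self]; exact dvd_zero _
  | add p q hp hq =>
    have h := dvd_add hp hq
    have : p - rename Fin.succ (res0 p) + (q - rename Fin.succ (res0 q))
        = p + q - rename Fin.succ (res0 (p + q)) := by
      rw [map_add, map_add]; ring
    rwa [this] at h
  | mul_X p i hp =>
    refine Fin.cases ?_ ?_ i
    · rw [map_mul, res0_X0, mul_zero, map_zero, sub_zero]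
      exact dvd_mul_left _ _
    · intro t
      rw [map_mul, res0_X_succ, map_mul, rename_X, ← sub_mul]
      exact hp.mul_right _

lemma linear_X0_ker (q : MPoly K (ℓ+1)) (hq : q.IsHomogeneous 1)
    (h : (X 0 : MPoly K (ℓ+1)) ∣ q) : ∃ a : K, q = C a * X 0 := by
  obtain ⟨g, rfl⟩ := h
  refine ⟨coeff 0 g, ?_⟩
  have hg : g = C (coeff 0 g) := by
    ext d
    rcases eq_or_ne d 0 with rfl | hd
    · simp [coeff_C]
    · rw [coeff_C, if_neg (Ne.symm hd)]
      by_contra hcd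
      have h1 : coeff (Finsupp.single 0 1 + d) ((X 0 : MPoly K (ℓ+1)) * g) ≠ 0 := by
        rwa [coeff_X_mul]
      have hsdeg : (Finsupp.single (0 : Fin (ℓ+1)) 1).degree = 1 := by
        simp [Finsupp.degree_single]
      have hddeg : d.degree ≠ 0 := fun h => hd ((Finsupp.degree_eq_zero_iff d).mp h)
      have hdadd : (Finsupp.single (0 : Fin (ℓ+1)) 1 + d).degree
          = (Finsupp.single (0 : Fin (ℓ+1)) 1).degree + d.degree := by
        simp only [Finsupp.degree_eq_weight_one]
        exact map_add _ _ _
      have hdeg : (Finsupp.single (0 : Fin (ℓ+1)) 1 + d).degree ≠ 1 := by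
        rw [hdadd, hsdeg]; omega
      exact h1 (hq.coeff_eq_zero hdeg)
  conv_lhs => rw [hg]
  ring

lemma finSuccEquiv_C' (a : K) :
    finSuccEquiv K ℓ (C a : MPoly K (ℓ+1)) = Polynomial.C (C a) := by
  simp [finSuccEquiv_apply]

lemma finSuccEquiv_rename_succ (q : MPoly K ℓ) :
    finSuccEquiv K ℓ (rename Fin.succ q) = Polynomial.C q := by
  induction q using MvPolynomial.induction_on with
  | C a => rw [rename_C, finSuccEquiv_C']
  | add p q hp hq => rw [map_add, map_add, hp, hq, map_add]
  | mul_X p i hp => rw [map_mul, rename_X, map_mul, hp, finSuccEquiv_X_succ, map_mul]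

lemma unit_eq_C : ∀ {n : ℕ} (u : MvPolynomial (Fin n) K), IsUnit u → ∃ c : K, u = C c := by
  intro n
  induction n with
  | zero => exact fun u _ => ⟨coeff 0 u, eq_C_of_isEmpty u⟩
  | succ n IH =>
    intro u hu
    have h1 : IsUnit (finSuccEquiv K n u) := hu.map (finSuccEquiv K n).toAlgHom
    obtain ⟨r, hr, hCr⟩ := Polynomial.isUnit_iff.mp h1
    obtain ⟨c, rfl⟩ := IH r hr
    refine ⟨c, (finSuccEquiv K n).injective ?_⟩
    rw [← hCr, finSuccEquiv_C']

lemma prime_linear : ∀ {n : ℕ} (q : MvPolynomial (Fin n) K),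
    q.IsHomogeneous 1 → q ≠ 0 → Prime q := by
  intro n
  induction n with
  | zero =>
    intro q hq hq0
    exact absurd (by
      ext d
      rw [Subsingleton.elim d 0, coeff_zero]
      exact hq.coeff_eq_zero (by simp)) hq0
  | succ n IH =>
    intro q hq hq0
    have hP : Prime (finSuccEquiv K n q) → Prime q := by
      intro h
      exact (MulEquiv.prime_iff (finSuccEquiv K n).toRingEquiv.toMulEquiv).mp h
    have hres : (res0 (K := K) (ℓ := n) q).IsHomogeneous 1 := by
      have h := hq.aeval (n := 1) (Fin.cases 0 X : Fin (n+1) → MvPolynomial (Fin n) K)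
        (fun i => Fin.cases (isHomogeneous_zero _ _ 1) (fun t => isHomogeneous_X _ _) i)
      simpa [res0] using h
    obtain ⟨a, ha⟩ := linear_X0_ker (q - rename Fin.succ (res0 q))
      (hq.sub (((hres).rename_isHomogeneous))) (X0_dvd_sub q)
    have hq_eq : q = C a * X 0 + rename Fin.succ (res0 q) := sub_eq_iff_eq_add.mp ha
    rcases eq_or_ne a 0 with rfl | hA
    · have hq_eq' : q = rename Fin.succ (res0 q) := by
        rw [C_0, zero_mul] at ha
        exact sub_eq_zero.mp ha
      have hr0 : res0 q ≠ 0 := by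
        intro h
        exact hq0 (by rw [hq_eq', h, map_zero])
      refine hP ?_
      rw [hq_eq', finSuccEquiv_rename_succ]
      exact Polynomial.prime_C_iff.mpr (IH (res0 q) hres hr0)
    · refine hP ?_
      have he : finSuccEquiv K n q =
          Polynomial.C (C a) * (Polynomial.X - Polynomial.C (-(C a⁻¹ * res0 q))) := by
        have hrhs : Polynomial.C (C a) * (Polynomial.X - Polynomial.C (-(C a⁻¹ * res0 q)))
            = Polynomial.C (C a) * Polynomial.X + Polynomial.C (res0 q) := by
          rw [map_neg, sub_neg_eq_add, mul_add, ← Polynomial.C_mul, ← mul_assoc, ← C_mul,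
            mul_inv_cancel₀ hA, C_1, one_mul]
        rw [hrhs]
        conv_lhs => rw [hq_eq]
        rw [map_add, map_mul, finSuccEquiv_C', finSuccEquiv_X_zero, finSuccEquiv_rename_succ]
      rw [he]
      have hu : IsUnit (Polynomial.C (C a) : Polynomial (MvPolynomial (Fin n) K)) :=
        Polynomial.isUnit_C.mpr ((Ne.isUnit hA).map (C : K →+* MvPolynomial (Fin n) K))
      obtain ⟨v, hv⟩ := hu
      have hassoc : Associated (Polynomial.X - Polynomial.C (-(C a⁻¹ * res0 q)))
          (Polynomial.C (C a) * (Polynomial.X - Polynomial.C (-(C a⁻¹ * res0 q)))) :=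
        ⟨v, by rw [hv]; ring⟩
      exact hassoc.prime (Polynomial.prime_X_sub_C _)

lemma prod_pow_dvd {R : Type*} [CommMonoidWithZero R] [IsCancelMulZero R] {ι : Type*} [DecidableEq ι]
    (f : ι → R) (mm : ι → ℕ) :
    ∀ s : Finset ι, ∀ x : R, (∀ j ∈ s, Prime (f j)) →
      (∀ j ∈ s, ∀ j' ∈ s, j ≠ j' → ¬ f j ∣ f j') →
      (∀ j ∈ s, f j ^ mm j ∣ x) → (∏ j ∈ s, f j ^ mm j) ∣ x := by
  intro s
  induction s using Finset.induction_on with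
  | empty => intro x _ _ _; simp
  | @insert a t ha ih =>
    intro x hp hnd hdvd
    obtain ⟨u, hu⟩ := hdvd a (Finset.mem_insert_self a t)
    have ht : ∀ j ∈ t, f j ^ mm j ∣ u := by
      intro j hj
      have hja : j ≠ a := fun h => ha (h ▸ hj)
      have h1 : f j ^ mm j ∣ f a ^ mm a * u := hu ▸ hdvd j (Finset.mem_insert_of_mem hj)
      have h2 : ¬ f j ∣ f a ^ mm a := fun hd =>
        hnd j (Finset.mem_insert_of_mem hj) a (Finset.mem_insert_self a t) hja
          ((hp j (Finset.mem_insert_of_mem hj)).dvd_of_dvd_pow hd)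
      exact (hp j (Finset.mem_insert_of_mem hj)).pow_dvd_of_dvd_mul_left _ h2 h1
    have hprod := ih u (fun j hj => hp j (Finset.mem_insert_of_mem hj))
      (fun j hj j' hj' hne => hnd j (Finset.mem_insert_of_mem hj) j'
        (Finset.mem_insert_of_mem hj') hne) ht
    rw [Finset.prod_insert ha, hu]
    exact mul_dvd_mul_left _ hprod

end Aux

/-- If `δ ∈ D₀^p(A,m)` (i.e. `δ(α_{H₀},·,…,·) = 0`), then its
restriction to `H₀ = {x₀ = 0}` lies in `D^p` of the multi-Ziegler restriction;
in particular the restriction map `res^p` is well defined. -/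
theorem stmt3 {K : Type} [Field K] {ℓ : ℕ} (A : ArrData K (ℓ+1)) (m : A.ι → ℕ)
    (hm : ∀ i, 0 < m i) (i0 : A.ι)
    (B : ArrData K ℓ) (mB : B.ι → ℕ) (hres : IsMZRes A i0 m B mB)
    (p : ℕ) (θ : (Fin (p+1) → MPoly K (ℓ+1)) → MPoly K (ℓ+1))
    (hθ : InDp A m θ)
    (h0 : ∀ v : Fin p → MPoly K (ℓ+1), θ (Fin.cons (A.α i0) v) = 0) :
    InDp B mB (fun v : Fin (p+1) → MPoly K ℓ =>
      res0 (θ (fun s => rename Fin.succ (v s)))) := by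
  classical
  obtain ⟨⟨halt, hlin, hleib⟩, hdvd⟩ := hθ
  obtain ⟨hα0, r, hsurj, hprop, hmB⟩ := hres
  simp only [hα0] at h0
  -- composition with update
  have hcomp : ∀ (v : Fin (p+1) → MPoly K ℓ) (s : Fin (p+1)) (x : MPoly K ℓ),
      (fun t => rename (Fin.succ : Fin ℓ → Fin (ℓ+1)) (Function.update v s x t))
        = Function.update (fun t => rename (Fin.succ : Fin ℓ → Fin (ℓ+1)) (v t)) s
            (rename Fin.succ x) := by
    intro v s x
    funext t
    rcases eq_or_ne t s with rfl | h
    · simp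
    · simp [Function.update_of_ne h]
  -- additivity
  have hadd : ∀ (s : Fin (p+1)) (w : Fin (p+1) → MPoly K (ℓ+1)) (f g : MPoly K (ℓ+1)),
      θ (Function.update w s (f + g))
        = θ (Function.update w s f) + θ (Function.update w s g) := by
    intro s w f g
    have h := hlin s w 1 f g
    rwa [one_smul, one_smul] at h
  -- zero slot
  have hzero : ∀ (w : Fin (p+1) → MPoly K (ℓ+1)) (s : Fin (p+1)),
      θ (Function.update w s 0) = 0 := by
    intro w s
    have h := hadd s w 0 0
    rw [add_zero] at h
    exact left_eq_add.mp h
  -- first entry X 0 gives zero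
  have hfst : ∀ w : Fin (p+1) → MPoly K (ℓ+1), w 0 = X 0 → θ w = 0 := by
    intro w hw
    have h := h0 (Fin.tail w)
    rwa [← hw, Fin.cons_self_tail] at h
  -- any slot X 0 gives zero
  have hX0 : ∀ (w : Fin (p+1) → MPoly K (ℓ+1)) (s : Fin (p+1)),
      θ (Function.update w s (X 0)) = 0 := by
    intro w s
    rcases eq_or_ne s 0 with rfl | hs
    · exact hfst _ (by simp)
    have h0s : (0 : Fin (p+1)) ≠ s := Ne.symm hs
    set w' := Function.update w s (X 0 : MPoly K (ℓ+1)) with hw'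
    set f := w' 0 with hf
    have hz : θ (Function.update (Function.update w' 0 (f + X 0)) s (f + X 0)) = 0 := by
      apply halt _ 0 s h0s
      simp [Function.update_of_ne h0s]
    rw [hadd s (Function.update w' 0 (f + X 0)) f (X 0)] at hz
    rw [Function.update_comm h0s (f + X 0) f w',
        Function.update_comm h0s (f + X 0) (X 0 : MPoly K (ℓ+1)) w'] at hz
    rw [hadd 0 (Function.update w' s f) f (X 0),
        hadd 0 (Function.update w' s (X 0)) f (X 0)] at hz
    have t1 : θ (Function.update (Function.update w' s f) 0 f) = 0 := by
      apply halt _ 0 s h0s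
      simp [Function.update_of_ne hs]
    have t2 : θ (Function.update (Function.update w' s f) 0 (X 0)) = 0 :=
      hfst _ (Function.update_self _ _ _)
    have t4 : θ (Function.update (Function.update w' s (X 0)) 0 (X 0)) = 0 :=
      hfst _ (Function.update_self _ _ _)
    have t3 : Function.update (Function.update w' s (X 0 : MPoly K (ℓ+1))) 0 f = w' := by
      rw [hw', Function.update_idem, ← hw', hf, Function.update_eq_self]
    rw [t1, t2, t4, t3] at hz
    simpa using hz
  -- nonzero scaling of the linear forms
  have hc : ∀ j : {j : A.ι // j ≠ i0}, ∃ c : K, c ≠ 0 ∧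
      res0 (A.α j.1) = C c * B.α (r j) := by
    intro j
    obtain ⟨c, hc0, hcr⟩ := hprop j
    exact ⟨c, hc0, by rw [hcr, smul_eq_C_mul]⟩
  choose c hc0 hcres using hc
  constructor
  · refine ⟨?_, ?_, ?_⟩
    · intro v i j hij hv
      show res0 (θ (fun t => rename Fin.succ (v t))) = 0
      rw [halt _ i j hij (by simp [hv]), map_zero]
    · intro s v a f g
      show res0 (θ (fun t => rename Fin.succ (Function.update v s (a • f + g) t)))
          = a • res0 (θ (fun t => rename Fin.succ (Function.update v s f t)))
            + res0 (θ (fun t => rename Fin.succ (Function.update v s g t)))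
      rw [hcomp, hcomp, hcomp, map_add, map_smul,
        hlin s _ a (rename Fin.succ f) (rename Fin.succ g), map_add, res0_smul]
    · intro s v f g
      show res0 (θ (fun t => rename Fin.succ (Function.update v s (f * g) t)))
          = f * res0 (θ (fun t => rename Fin.succ (Function.update v s g t)))
            + g * res0 (θ (fun t => rename Fin.succ (Function.update v s f t)))
      rw [hcomp, hcomp, hcomp, map_mul,
        hleib s _ (rename Fin.succ f) (rename Fin.succ g), map_add, map_mul, map_mul,
        res0_rename, res0_rename]
  · intro k s v
    show B.α k ^ mB k ∣ res0 (θ (fun t => rename Fin.succ (Function.update v s (B.α k) t)))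
    rw [hcomp]
    set V : Fin (p+1) → MPoly K (ℓ+1) := fun t => rename Fin.succ (v t) with hV
    set F : MPoly K (ℓ+1) := θ (Function.update V s (rename Fin.succ (B.α k))) with hF
    set J : Finset {j : A.ι // j ≠ i0} := Finset.univ.filter (fun j => r j = k) with hJ
    have hmBk : mB k = ∑ j ∈ J, m j.1 := by
      rw [hmB k, ← finsum_mem_coe_finset]
      congr 1
      ext j
      simp [hJ]
    -- each localized form divides F
    have hdiv : ∀ j ∈ J, A.α j.1 ^ m j.1 ∣ F := by
      intro j hj
      have hrj : r j = k := by simpa [hJ] using hj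
      have hres0j : res0 (A.α j.1) = C (c j) * B.α k := by rw [hcres j, hrj]
      set q : MPoly K (ℓ+1) := A.α j.1 - C (c j) * rename Fin.succ (B.α k) with hq
      have hq0 : res0 q = 0 := by
        rw [hq, map_sub, map_mul, res0_C, res0_rename, hres0j, sub_self]
      have hqdvd : (X 0 : MPoly K (ℓ+1)) ∣ q := by
        have h := X0_dvd_sub q
        rwa [hq0, map_zero, sub_zero] at h
      have hqhom : q.IsHomogeneous 1 :=
        (A.homog j.1).sub (((B.homog k).rename_isHomogeneous).C_mul _)
      obtain ⟨a, ha⟩ := linear_X0_ker q hqhom hqdvd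
      have hαj : A.α j.1 = (c j) • (rename Fin.succ (B.α k)) + C a * X 0 := by
        have h := sub_eq_iff_eq_add.mp ha
        rw [smul_eq_C_mul, h]
        ring
      have hCaX0 : θ (Function.update V s (C a * X 0)) = 0 := by
        have h3 := hlin s V a (X 0) 0
        rw [add_zero, ← smul_eq_C_mul] at *
        rw [h3, hzero, hX0, smul_zero, add_zero]
      have hθval : θ (Function.update V s (A.α j.1)) = c j • F := by
        rw [hαj, hlin s V (c j) (rename Fin.succ (B.α k)) (C a * X 0), hCaX0, add_zero, hF]
      have hd := hdvd j.1 s V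
      rw [hθval, smul_eq_C_mul] at hd
      have hFeq : F = C (c j)⁻¹ * (C (c j) * F) := by
        rw [← mul_assoc, ← C_mul, inv_mul_cancel₀ (hc0 j), C_1, one_mul]
      rw [hFeq]
      exact hd.mul_left _
    -- product divides F
    have hprodF : (∏ j ∈ J, A.α j.1 ^ m j.1) ∣ F := by
      apply prod_pow_dvd
      · exact fun j _ => prime_linear (A.α j.1) (A.homog j.1) (A.nz j.1)
      · intro j _ j' _ hne hdvd'
        have hp := prime_linear (A.α j.1) (A.homog j.1) (A.nz j.1)
        have hp' := prime_linear (A.α j'.1) (A.homog j'.1) (A.nz j'.1)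
        obtain ⟨u, hu⟩ := (hp.associated_of_dvd hp' hdvd')
        obtain ⟨cu, hcu⟩ := unit_eq_C (u : MPoly K (ℓ+1)) u.isUnit
        have hj1 : j.1 ≠ j'.1 := fun h => hne (Subtype.ext h)
        exact (A.nprop j'.1 j.1 hj1.symm cu)
          (by rw [← hu, hcu, smul_eq_C_mul, mul_comm])
      · exact hdiv
    -- push through res0
    have hres0F : (∏ j ∈ J, (C (c j) * B.α k) ^ m j.1) ∣ res0 F := by
      have h := map_dvd (res0 (K := K) (ℓ := ℓ)) hprodF
      rw [map_prod] at h
      have heq : ∀ jj ∈ J, res0 (A.α jj.1 ^ m jj.1) = (C (c jj) * B.α k) ^ m jj.1 := by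
        intro jj hjj
        have hrj : r jj = k := by simpa [hJ] using hjj
        rw [map_pow, hcres jj, hrj]
      rwa [Finset.prod_congr rfl heq] at h
    refine dvd_trans ?_ hres0F
    have hsplit : (∏ j ∈ J, (C (c j) * B.α k) ^ m j.1)
        = (∏ j ∈ J, (C (c j)) ^ m j.1) * B.α k ^ (∑ j ∈ J, m j.1) := by
      rw [← Finset.prod_pow_eq_pow_sum, ← Finset.prod_mul_distrib]
      exact Finset.prod_congr rfl fun j _ => mul_pow _ _ _
    rw [hsplit, hmBk]
    exact Dvd.intro_left _ rfl
end

section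
/- Let (A,m) be a multiarrangement with H_0 ∈ A, and suppose (A,m) has a good summand to H_0. If θ_0 is the good summand, then every θ ∈ D(A,m) decomposes uniquely as θ = θ' + f·θ_0 with f = θ(α_{H_0})/α_{H_0}^{m_0} ∈ S and θ' ∈ D_0(A,m); hence D(A,m) = S·θ_0 ⊕ D_0(A,m). -/
open MvPolynomial

variable {K : Type} [Field K] {ℓ : ℕ}

/-- A good summand `θ₀` to `i0` yields a unique decomposition
`θ = θ' + f·θ₀` with `θ' ∈ D₀(A,m)` and `f = θ(α_{H₀})/α_{H₀}^{m₀}`; hence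
`D(A,m) = S·θ₀ ⊕ D₀(A,m)`. -/
theorem stmt6 {K : Type} [Field K] {ℓ : ℕ} (A : ArrData K ℓ) (m : A.ι → ℕ)
    (hm : ∀ i, 0 < m i) (i0 : A.ι)
    (θ0 : Derivation K (MPoly K ℓ) (MPoly K ℓ)) (hθ0 : θ0 ∈ Dmod A m)
    (hpd : pdegIs θ0 (m i0)) (hgs : θ0 (A.α i0) = A.α i0 ^ m i0) :
    ∀ θ ∈ Dmod A m,
      ∃! q : MPoly K ℓ × Derivation K (MPoly K ℓ) (MPoly K ℓ),
        q.2 ∈ Dmod A m ∧ q.2 (A.α i0) = 0 ∧ θ = q.2 + q.1 • θ0 ∧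
        A.α i0 ^ m i0 * q.1 = θ (A.α i0) := by
  intro θ hθ
  obtain ⟨f, hf⟩ := hθ i0 (Set.mem_univ i0)
  have hα : A.α i0 ^ m i0 ≠ 0 := pow_ne_zero _ (A.nz i0)
  refine ⟨(f, θ - f • θ0), ⟨?_, ?_, ?_, ?_⟩, ?_⟩
  · exact Submodule.sub_mem _ hθ (Submodule.smul_mem _ f hθ0)
  · show (θ - f • θ0) (A.α i0) = 0
    rw [Derivation.sub_apply, Derivation.smul_apply, hgs, hf, smul_eq_mul,
      mul_comm, sub_self]
  · show θ = (θ - f • θ0) + f • θ0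
    abel
  · exact hf.symm
  · rintro ⟨g, η⟩ ⟨hη, hη0, hdec, hg⟩
    have hfg : g = f := mul_left_cancel₀ hα (hg.trans hf)
    subst hfg
    have : η = θ - g • θ0 := by
      rw [hdec]; abel
    simp [this]
end

section
/- Let (A,m) be a multiarrangement with a good summand θ_0 to H_0 ∈ A, and define the contraction maps ∂ : D^p(A,m) → D^{p−1}(A,m) by ∂(θ)(f_2,…,f_p) = θ(α_{H_0}, f_2,…,f_p)/α_{H_0}^{m_0}. Then ∂∘∂ = 0 and the resulting complex 0 → D^ℓ(A,m) → D^{ℓ−1}(A,m) → ⋯ → D^0(A,m) → 0 is acyclic (exact), with explicit contracting homotopy δ ↦ θ_0 ∧ δ. -/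
open MvPolynomial

variable {K : Type} [Field K] {ℓ : ℕ}

section Stmt8Aux

lemma removeNth_update_succAbove {n : ℕ} {β : Type*} (k : Fin (n+1)) (s : Fin n)
    (v : Fin (n+1) → β) (x : β) :
    Fin.removeNth k (Function.update v (k.succAbove s) x) =
      Function.update (Fin.removeNth k v) s x := by
  funext t
  simp only [Fin.removeNth, Function.update_apply]
  by_cases h : t = s
  · simp [h]
  · rw [if_neg (fun hc => h (Fin.succAbove_right_injective hc)), if_neg h]

lemma alt_of_adjacent {n : ℕ} {β M : Type*} [AddCommMonoid β] [AddCommGroup M]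
    (θ : (Fin n → β) → M)
    (hadd : ∀ (s : Fin n) (v : Fin n → β) (f g : β),
      θ (Function.update v s (f + g)) =
        θ (Function.update v s f) + θ (Function.update v s g))
    (hadj : ∀ (v : Fin n → β) (i j : Fin n), (i : ℕ) + 1 = (j : ℕ) → v i = v j → θ v = 0) :
    ∀ (v : Fin n → β) (i j : Fin n), i ≠ j → v i = v j → θ v = 0 := by
  have hswap : ∀ (v : Fin n → β) (i j : Fin n), (i : ℕ) + 1 = (j : ℕ) →
      θ (Function.update (Function.update v i (v j)) j (v i)) = - θ v := by
    intro v i j hij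
    have hne : i ≠ j := Fin.ne_of_val_ne (by omega)
    have h0 : θ (Function.update (Function.update v i (v i + v j)) j (v i + v j)) = 0 := by
      apply hadj _ i j hij
      rw [Function.update_of_ne hne, Function.update_self, Function.update_self]
    rw [hadd j] at h0
    rw [Function.update_comm hne (v i + v j) (v i) v, hadd i,
      Function.update_comm hne (v i + v j) (v j) v, hadd i] at h0
    have e1 : θ (Function.update (Function.update v j (v i)) i (v i)) = 0 := by
      apply hadj _ i j hij
      rw [Function.update_self, Function.update_of_ne (Ne.symm hne), Function.update_self]
    have e2 : θ (Function.update (Function.update v j (v j)) i (v j)) = 0 := by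
      apply hadj _ i j hij
      rw [Function.update_self, Function.update_of_ne (Ne.symm hne), Function.update_self]
    have e3 : Function.update (Function.update v j (v j)) i (v i) = v := by
      rw [Function.update_eq_self, Function.update_eq_self]
    have e4 : Function.update (Function.update v j (v i)) i (v j) =
        Function.update (Function.update v i (v j)) j (v i) :=
      (Function.update_comm hne (v j) (v i) v).symm
    rw [e1, e2, e3, e4, zero_add, add_zero] at h0
    exact eq_neg_of_add_eq_zero_left h0
  have main : ∀ d : ℕ, ∀ (v : Fin n → β) (i j : Fin n),
      (j : ℕ) = (i : ℕ) + d + 1 → v i = v j → θ v = 0 := by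
    intro d
    induction d with
    | zero =>
      intro v i j h hv
      exact hadj v i j (by omega) hv
    | succ d ih =>
      intro v i j h hv
      have hjpos : 0 < (j : ℕ) := by omega
      set j' : Fin n := ⟨(j : ℕ) - 1, lt_of_le_of_lt (Nat.sub_le _ _) j.isLt⟩ with hj'
      have hj'1 : (j' : ℕ) + 1 = (j : ℕ) := Nat.succ_pred_eq_of_pos hjpos
      have hne1 : i ≠ j := Fin.ne_of_val_ne (by omega)
      have hne2 : i ≠ j' := Fin.ne_of_val_ne (show (i : ℕ) ≠ (j : ℕ) - 1 from by omega)
      have hswapped := hswap v j' j hj'1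
      set w := Function.update (Function.update v j' (v j)) j (v j') with hw
      have hwi : w i = v i := by
        rw [hw, Function.update_of_ne hne1, Function.update_of_ne hne2]
      have hwj' : w j' = v j := by
        rw [hw, Function.update_of_ne
          (Fin.ne_of_val_ne (show (j : ℕ) - 1 ≠ (j : ℕ) from by omega)),
          Function.update_self]
      have hzero : θ w = 0 :=
        ih w i j' (show (j' : ℕ) = (i : ℕ) + d + 1 from by
          show (j : ℕ) - 1 = (i : ℕ) + d + 1
          omega) (by rw [hwi, hwj', hv])
      rw [hzero] at hswapped
      exact neg_eq_zero.mp hswapped.symm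
  intro v i j hne hv
  rcases Nat.lt_or_ge (i : ℕ) (j : ℕ) with h | h
  · exact main ((j : ℕ) - (i : ℕ) - 1) v i j (by omega) hv
  · have hvne : (i : ℕ) ≠ (j : ℕ) := fun hh => hne (Fin.ext hh)
    exact main ((i : ℕ) - (j : ℕ) - 1) v j i (by omega) hv.symm

lemma removeNth_adjacent {n : ℕ} {β : Type*} (v : Fin (n+1) → β) (i j : Fin (n+1))
    (hij : (i : ℕ) + 1 = (j : ℕ)) (hv : v i = v j) :
    Fin.removeNth i v = Fin.removeNth j v := by
  funext t
  simp only [Fin.removeNth]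
  rcases lt_trichotomy (t : ℕ) (i : ℕ) with h | h | h
  · rw [Fin.succAbove_of_castSucc_lt i t (by simpa [Fin.lt_def] using h),
      Fin.succAbove_of_castSucc_lt j t (by simp [Fin.lt_def]; omega)]
  · rw [Fin.succAbove_of_le_castSucc i t (by simp [Fin.le_def]; omega),
      Fin.succAbove_of_castSucc_lt j t (by simp [Fin.lt_def]; omega)]
    have h1 : t.succ = j := Fin.ext (by simp; omega)
    have h2 : t.castSucc = i := Fin.ext (by simp; omega)
    rw [h1, h2, hv]
  · rw [Fin.succAbove_of_le_castSucc i t (by simp [Fin.le_def]; omega),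
      Fin.succAbove_of_le_castSucc j t (by simp [Fin.le_def]; omega)]

lemma removeNth_succ_cons' {n : ℕ} {β : Type*} (a : β) (v : Fin (n+1) → β) (k : Fin (n+1)) :
    (Fin.removeNth (Fin.succ k) (Fin.cons a v : Fin (n+2) → β) : Fin (n+1) → β) =
      Fin.cons a (Fin.removeNth k v : Fin n → β) := by
  funext t
  cases t using Fin.cases with
  | zero => simp [Fin.removeNth]
  | succ t => simp [Fin.removeNth, Fin.succ_succAbove_succ]

end Stmt8Aux

/-- For a good summand `θ₀` to `i0`, the contraction maps
`∂θ = θ(α_{H₀},·,…,·)/α_{H₀}^{m₀}` satisfy `∂∘∂ = 0`, and the resulting complex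
`0 → D^ℓ(A,m) → ⋯ → D^0(A,m) → 0` is acyclic (exact). -/
theorem stmt8 {K : Type} [Field K] {ℓ : ℕ} (A : ArrData K ℓ) (m : A.ι → ℕ)
    (hm : ∀ i, 0 < m i) (i0 : A.ι)
    (θ0 : Derivation K (MPoly K ℓ) (MPoly K ℓ)) (hθ0 : θ0 ∈ Dmod A m)
    (hpd : pdegIs θ0 (m i0)) (hgs : θ0 (A.α i0) = A.α i0 ^ m i0) :
    (∀ (p : ℕ) (θ : (Fin (p+2) → MPoly K ℓ) → MPoly K ℓ), InDp A m θ →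
      ∀ v : Fin p → MPoly K ℓ, θ (Fin.cons (A.α i0) (Fin.cons (A.α i0) v)) = 0) ∧
    (∀ (p : ℕ) (θ : (Fin (p+1) → MPoly K ℓ) → MPoly K ℓ), InDp A m θ →
      (∀ v : Fin p → MPoly K ℓ, θ (Fin.cons (A.α i0) v) = 0) →
      ∃ η : (Fin (p+2) → MPoly K ℓ) → MPoly K ℓ, InDp A m η ∧
        ∀ v : Fin (p+1) → MPoly K ℓ,
          η (Fin.cons (A.α i0) v) = A.α i0 ^ m i0 * θ v) ∧
    (∀ f : MPoly K ℓ, ∃ η ∈ Dmod A m, η (A.α i0) = A.α i0 ^ m i0 * f) := by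
  refine ⟨?_, ?_, ?_⟩
  · -- ∂∘∂ = 0
    intro p θ hθ v
    have h1 : (1 : Fin (p+2)) = Fin.succ 0 := by
      ext; simp
    refine hθ.1.1 _ 0 1 (by simp [Fin.ext_iff]) ?_
    rw [h1, Fin.cons_succ, Fin.cons_zero, Fin.cons_zero]
  · -- acyclicity via the homotopy θ0 ∧ ·
    intro p θ hθ hz
    obtain ⟨⟨halt, hlin, hleib⟩, hdvd⟩ := hθ
    have h0 : ∀ i, A.α i ^ m i ∣ θ0 (A.α i) := fun i => hθ0 i (Set.mem_univ i)
    set η : (Fin (p+2) → MPoly K ℓ) → MPoly K ℓ :=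
      fun v => ∑ k : Fin (p+2),
        (-1 : MPoly K ℓ) ^ (k : ℕ) * (θ0 (v k) * θ (Fin.removeNth k v)) with hη
    have hη2 : ∀ (s : Fin (p+2)) (v : Fin (p+2) → MPoly K ℓ) (a : K) (f g : MPoly K ℓ),
        η (Function.update v s (a • f + g)) =
          a • η (Function.update v s f) + η (Function.update v s g) := by
      intro s v a f g
      simp only [hη]
      rw [Finset.smul_sum, ← Finset.sum_add_distrib]
      refine Finset.sum_congr rfl fun k _ => ?_
      by_cases hk : k = s
      · subst hk
        rw [Fin.removeNth_update, Fin.removeNth_update, Fin.removeNth_update,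
          Function.update_self, Function.update_self, Function.update_self,
          map_add, Derivation.map_smul, smul_eq_C_mul, smul_eq_C_mul]
        ring
      · obtain ⟨s', hs'⟩ := Fin.exists_succAbove_eq (show s ≠ k from fun h => hk h.symm)
        have hknoteq : k ≠ k.succAbove s' := (Fin.succAbove_ne k s').symm
        rw [← hs', removeNth_update_succAbove, removeNth_update_succAbove,
          removeNth_update_succAbove, Function.update_of_ne hknoteq,
          Function.update_of_ne hknoteq, Function.update_of_ne hknoteq,
          hlin s' (Fin.removeNth k v) a f g, smul_eq_C_mul, smul_eq_C_mul]
        ring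
    have hη3 : ∀ (s : Fin (p+2)) (v : Fin (p+2) → MPoly K ℓ) (f g : MPoly K ℓ),
        η (Function.update v s (f * g)) =
          f * η (Function.update v s g) + g * η (Function.update v s f) := by
      intro s v f g
      simp only [hη]
      rw [Finset.mul_sum, Finset.mul_sum, ← Finset.sum_add_distrib]
      refine Finset.sum_congr rfl fun k _ => ?_
      by_cases hk : k = s
      · subst hk
        rw [Fin.removeNth_update, Fin.removeNth_update, Fin.removeNth_update,
          Function.update_self, Function.update_self, Function.update_self,
          Derivation.leibniz, smul_eq_mul, smul_eq_mul]
        ring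
      · obtain ⟨s', hs'⟩ := Fin.exists_succAbove_eq (show s ≠ k from fun h => hk h.symm)
        have hknoteq : k ≠ k.succAbove s' := (Fin.succAbove_ne k s').symm
        rw [← hs', removeNth_update_succAbove, removeNth_update_succAbove,
          removeNth_update_succAbove, Function.update_of_ne hknoteq,
          Function.update_of_ne hknoteq, Function.update_of_ne hknoteq,
          hleib s' (Fin.removeNth k v) f g]
        ring
    have hηadj : ∀ (v : Fin (p+2) → MPoly K ℓ) (i j : Fin (p+2)),
        (i : ℕ) + 1 = (j : ℕ) → v i = v j → η v = 0 := by
      intro v i j hij hv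
      have hne : i ≠ j := Fin.ne_of_val_ne (by omega)
      have hR : Fin.removeNth i v = Fin.removeNth j v := removeNth_adjacent v i j hij hv
      have hstep : η v = ∑ k ∈ ({i, j} : Finset (Fin (p+2))),
          (-1 : MPoly K ℓ) ^ (k : ℕ) * (θ0 (v k) * θ (Fin.removeNth k v)) := by
        simp only [hη]
        refine (Finset.sum_subset (Finset.subset_univ _) ?_).symm
        intro k _ hk
        simp only [Finset.mem_insert, Finset.mem_singleton, not_or] at hk
        obtain ⟨i', hi'⟩ := Fin.exists_succAbove_eq (Ne.symm hk.1)
        obtain ⟨j', hj'⟩ := Fin.exists_succAbove_eq (Ne.symm hk.2)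
        have hne' : i' ≠ j' := by
          rintro rfl
          exact hne (hi' ▸ hj' ▸ rfl)
        rw [halt (Fin.removeNth k v) i' j' hne'
          (by simp only [Fin.removeNth]; rw [hi', hj', hv]), mul_zero, mul_zero]
      rw [hstep, Finset.sum_pair hne, hR, hv, ← hij, pow_succ]
      ring
    have hηadd : ∀ (s : Fin (p+2)) (v : Fin (p+2) → MPoly K ℓ) (f g : MPoly K ℓ),
        η (Function.update v s (f + g)) =
          η (Function.update v s f) + η (Function.update v s g) := by
      intro s v f g
      have := hη2 s v 1 f g
      simpa using this
    have hη1 : ∀ (v : Fin (p+2) → MPoly K ℓ) (i j : Fin (p+2)),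
        i ≠ j → v i = v j → η v = 0 :=
      alt_of_adjacent η (fun s v f g => hηadd s v f g) hηadj
    refine ⟨η, ⟨⟨fun v i j hne hv => hη1 v i j hne hv, hη2, hη3⟩, ?_⟩, ?_⟩
    · -- divisibility
      intro i s v
      simp only [hη]
      refine Finset.dvd_sum fun k _ => ?_
      by_cases hk : k = s
      · subst hk
        rw [Function.update_self, Fin.removeNth_update]
        exact ((h0 i).mul_right _).mul_left _
      · obtain ⟨s', hs'⟩ := Fin.exists_succAbove_eq (show s ≠ k from fun h => hk h.symm)
        have hknoteq : k ≠ k.succAbove s' := (Fin.succAbove_ne k s').symm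
        rw [← hs', removeNth_update_succAbove, Function.update_of_ne hknoteq]
        exact ((hdvd i s' (Fin.removeNth k v)).mul_left _).mul_left _
    · -- the homotopy identity
      intro v
      simp only [hη]
      rw [Fin.sum_univ_succ]
      have hrest : ∀ k : Fin (p+1),
          (-1 : MPoly K ℓ) ^ ((Fin.succ k : Fin (p+2)) : ℕ) *
            (θ0 ((Fin.cons (A.α i0) v : Fin (p+2) → MPoly K ℓ) (Fin.succ k)) *
              θ (Fin.removeNth (Fin.succ k)
                (Fin.cons (A.α i0) v : Fin (p+2) → MPoly K ℓ))) = 0 := by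
        intro k
        rw [removeNth_succ_cons', hz (Fin.removeNth k v), mul_zero, mul_zero]
      rw [Finset.sum_congr rfl fun k _ => hrest k, Finset.sum_const_zero, add_zero,
        Fin.cons_zero, Fin.removeNth_zero, Fin.tail_cons, hgs]
      simp
  · -- surjectivity at the end of the complex
    intro f
    refine ⟨f • θ0, Submodule.smul_mem _ f hθ0, ?_⟩
    rw [Derivation.smul_apply, smul_eq_mul, hgs, mul_comm]
end
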